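/- Let (T, M) be a local domain with residue field k and residue map π : T → k, and let D be an integral domain with fraction field k, viewed as a subring of k. If the pullback A := D ×_k T = π⁻¹(D) is perinormal, then both D and T are perinormal. -/

import Mathlib

universe u

/-- A ring homomorphism `f : R → S` satisfies going-down if whenever `p' ⊆ p` are primes
of `R` and `q` is a prime of `S` lying over `p`, there is a prime `q' ⊆ q` of `S` lying
over `p'`. -/
def GoesDown {R S : Type*} [CommRing R] [CommRing S] (f : R →+* S) : Prop :=
  ∀ ⦃p' p : Ideal R⦄, p'.IsPrime → p.IsPrime → p' ≤ p →
    ∀ ⦃q : Ideal S⦄, q.IsPrime → q.comap f = p →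
      ∃ q' : Ideal S, q'.IsPrime ∧ q' ≤ q ∧ q'.comap f = p'

/-- A subring `R` of a field `F` (to be thought of as the fraction field of `R`, so that
the overrings of `R` are the subrings of `F` containing `R`) is perinormal if every
going-down overring of `R` is flat as an `R`-module. -/
def IsPerinormalSubring {F : Type*} [Field F] (R : Subring F) : Prop :=
  ∀ S : Subring F, ∀ h : R ≤ S, GoesDown (Subring.inclusion h) →
    @Module.Flat R S _ _ (RingHom.toAlgebra (Subring.inclusion h)).toModule

namespace Stmt13Aux

/-! ### The colon criterion for flatness of an overring (after Richman) -/

section Colon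

variable {K : Type u} [Field K]

/-- Richman's "colon" criterion for flatness of an overring `S` of `R` inside a field `K`:
for each `s ∈ S` the colon ideal `(R : s)` generates the unit ideal of `S`. -/
def ColonCond (R S : Subring K) : Prop :=
  ∀ s : S, ∃ (n : ℕ) (c : Fin n → R) (y : Fin n → S),
    (∀ j, (c j : K) * (s : K) ∈ R) ∧ ∑ j, (c j : K) * (y j : K) = 1

theorem colonCond_mono {R T S : Subring K} (hRT : R ≤ T) (h : ColonCond R S) :
    ColonCond T S := by
  intro s
  obtain ⟨n, c, y, h1, h2⟩ := h s
  exact ⟨n, fun j => ⟨c j, hRT (c j).2⟩, y, fun j => hRT (h1 j), h2⟩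

/-- A common colon family for finitely many elements. -/
theorem colonCond_finset {R S : Subring K} (h : ColonCond R S) (G : Finset S) :
    ∃ (κ : Type u) (_ : Fintype κ) (c : κ → R) (y : κ → S),
      (∀ s ∈ G, ∀ j, (c j : K) * (s : K) ∈ R) ∧ ∑ j, (c j : K) * (y j : K) = 1 := by
  classical
  induction G using Finset.induction_on with
  | empty =>
      exact ⟨PUnit, inferInstance, fun _ => 1, fun _ => 1, by simp, by simp⟩
  | insert s G hs ih =>
      obtain ⟨n₁, c₁, y₁, h11, h12⟩ := h s
      obtain ⟨κ₂, _, c₂, y₂, h21, h22⟩ := ih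
      refine ⟨Fin n₁ × κ₂, inferInstance, fun j => c₁ j.1 * c₂ j.2, fun j => y₁ j.1 * y₂ j.2,
        ?_, ?_⟩
      · rintro t ht j
        rcases Finset.mem_insert.1 ht with rfl | ht
        · have : ((c₁ j.1 : K) * (t : K)) * (c₂ j.2 : K) ∈ R :=
            R.mul_mem (h11 j.1) (c₂ j.2).2
          convert this using 1; push_cast; ring
        · have : ((c₂ j.2 : K) * (t : K)) * (c₁ j.1 : K) ∈ R :=
            R.mul_mem (h21 t ht j.2) (c₁ j.1).2
          convert this using 1; push_cast; ring
      · calc ∑ j : Fin n₁ × κ₂, ((c₁ j.1 * c₂ j.2 : R) : K) * ((y₁ j.1 * y₂ j.2 : S) : K)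
            = (∑ j₁ : Fin n₁, (c₁ j₁ : K) * (y₁ j₁ : K)) *
              (∑ j₂ : κ₂, (c₂ j₂ : K) * (y₂ j₂ : K)) := by
              rw [Finset.sum_mul_sum, ← Finset.sum_product']
              · apply Finset.sum_congr rfl
                intro j _
                push_cast
                ring
          _ = 1 := by rw [h12, h22, one_mul]

theorem flat_of_colonCond {R S : Subring K} (h : R ≤ S) (hc : ColonCond R S) :
    @Module.Flat R S _ _ (RingHom.toAlgebra (Subring.inclusion h)).toModule := by
  classical
  letI : Algebra R S := RingHom.toAlgebra (Subring.inclusion h)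
  have hsmul : ∀ (r : R) (s : S), ((r • s : S) : K) = (r : K) * (s : K) := fun r s => rfl
  apply Module.Flat.of_forall_isTrivialRelation
  intro ι f x hsum
  have hK : ∑ i, (f i : K) * (x i : K) = 0 := by
    have h0 : ((∑ i, f i • x i : S) : K) = 0 := by rw [hsum]; rfl
    rw [AddSubmonoidClass.coe_finset_sum] at h0
    simpa [hsmul] using h0
  obtain ⟨κ, _, c, y, h1, h2⟩ := colonCond_finset hc (Finset.univ.image x)
  have h1' : ∀ i j, (c j : K) * (x i : K) ∈ R := fun i j =>
    h1 (x i) (Finset.mem_image_of_mem x (Finset.mem_univ i)) j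
  obtain ⟨κ, c, y, h1', h2⟩ : ∃ (κ : ℕ) (c : Fin κ → R) (y : Fin κ → S),
      (∀ i j, (c j : K) * (x i : K) ∈ R) ∧ ∑ j, (c j : K) * (y j : K) = 1 :=
    ⟨Fintype.card κ, fun j => c ((Fintype.equivFin κ).symm j),
      fun j => y ((Fintype.equivFin κ).symm j), fun i j => h1' i _, by
        rw [Equiv.sum_comp (Fintype.equivFin κ).symm (fun j => (c j : K) * (y j : K))]
        exact h2⟩
  refine ⟨κ, fun i j => ⟨(c j : K) * (x i : K), h1' i j⟩, y, ?_, ?_⟩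
  · intro i
    apply Subtype.ext
    rw [AddSubmonoidClass.coe_finset_sum]
    simp only [hsmul]
    calc (x i : K) = (x i : K) * ∑ j, (c j : K) * (y j : K) := by rw [h2, mul_one]
    _ = ∑ j, (((c j : K) * (x i : K) : K)) * (y j : K) := by
        rw [Finset.mul_sum]; apply Finset.sum_congr rfl; intros; ring
  · intro j
    apply Subtype.ext
    rw [AddSubmonoidClass.coe_finset_sum]
    push_cast
    calc ∑ i, (f i : K) * ((c j : K) * (x i : K))
        = (c j : K) * ∑ i, (f i : K) * (x i : K) := by
          rw [Finset.mul_sum]; apply Finset.sum_congr rfl; intros; ring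
      _ = 0 := by rw [hK, mul_zero]
      _ = ((0 : R) : K) := by norm_num

set_option maxHeartbeats 1000000 in
theorem colonCond_of_flat {R S : Subring K} (h : R ≤ S)
    (hfrac : ∀ z : K, ∃ a b : R, (b : K) ≠ 0 ∧ z * b = a)
    (hf : @Module.Flat R S _ _ (RingHom.toAlgebra (Subring.inclusion h)).toModule) :
    ColonCond R S := by
  classical
  letI : Algebra R S := RingHom.toAlgebra (Subring.inclusion h)
  have hsmul : ∀ (r : R) (s : S), ((r • s : S) : K) = (r : K) * (s : K) := fun r s => rfl
  haveI : Module.Flat R S := hf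
  intro s
  obtain ⟨a, b, hb0, hab⟩ := hfrac (s : K)
  set f : ULift.{u} Bool → R := fun i => if i.down then b else -a with hfdef
  set x : ULift.{u} Bool → S := fun i => if i.down then s else 1 with hxdef
  have hs2 : ∀ (g : ULift.{u} Bool → K), ∑ i, g i = g ⟨true⟩ + g ⟨false⟩ := by
    intro g
    rw [Fintype.sum_equiv (Equiv.ulift (α := Bool)) g (fun b => g ⟨b⟩) (fun _ => rfl)]
    exact Fintype.sum_bool _
  have hrel : ∑ i, f i • x i = 0 := by
    apply Subtype.ext
    rw [AddSubmonoidClass.coe_finset_sum]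
    simp only [hsmul]
    rw [hs2 (fun i => (f i : K) * (x i : K))]
    simp only [hfdef, hxdef, if_true, if_false]
    push_cast
    linear_combination hab
  have htriv : Module.IsTrivialRelation f x :=
    Module.Flat.isTrivialRelation_of_sum_smul_eq_zero hrel
  obtain ⟨κ, A, y, hxy, hfa⟩ := htriv
  have key : ∀ j, (A ⟨false⟩ j : K) * (s : K) ∈ R := by
    intro j
    have h0 := hfa j
    have h0K : ((∑ i, f i * A i j : R) : K) = 0 := by rw [h0]; rfl
    rw [AddSubmonoidClass.coe_finset_sum] at h0K
    rw [hs2 (fun i => ((f i * A i j : R) : K))] at h0K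
    norm_num [hfdef] at h0K
    have keyj : (A ⟨false⟩ j : K) * (s : K) = (A ⟨true⟩ j : K) := by
      apply mul_left_cancel₀ hb0
      linear_combination (A ⟨false⟩ j : K) * hab - h0K
    rw [keyj]; exact (A ⟨true⟩ j).2
  have hone : ∑ j, (A ⟨false⟩ j : K) * (y j : K) = 1 := by
    have h1 := hxy ⟨false⟩
    have h1K : ((1 : S) : K) = ((∑ j, A ⟨false⟩ j • y j : S) : K) := by
      rw [← h1]; simp [hxdef]
    rw [AddSubmonoidClass.coe_finset_sum] at h1K
    simp only [hsmul] at h1K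
    exact h1K.symm
  let e := Fintype.equivFin (Fin κ)
  refine ⟨Fintype.card (Fin κ), fun j => A ⟨false⟩ (e.symm j), fun j => y (e.symm j),
    fun j => key (e.symm j), ?_⟩
  rw [Equiv.sum_comp e.symm (fun j => (A ⟨false⟩ j : K) * (y j : K))]
  exact hone

end Colon

/-! ### Going down between a local domain and subrings containing its maximal ideal -/

theorem goesDown_comp {R S T : Type*} [CommRing R] [CommRing S] [CommRing T]
    {f : R →+* S} {g : S →+* T} (hf : GoesDown f) (hg : GoesDown g) :
    GoesDown (g.comp f) := by
  intro p' p hp' hp hle q hq hcq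
  have hqS : (q.comap g).IsPrime := hq.comap g
  have h1 : (q.comap g).comap f = p := by rw [Ideal.comap_comap]; exact hcq
  obtain ⟨pS', hpS', hle1, hc1⟩ := hf hp' hp hle hqS h1
  obtain ⟨q', hq', hle2, hc2⟩ := hg hpS' hqS hle1 hq rfl
  exact ⟨q', hq', hle2, by rw [← Ideal.comap_comap, hc2, hc1]⟩

section GD

variable {K : Type*} [Field K] (T : Subring K) [IsLocalRing T]
  (A : Subring K) (hAT : A ≤ T)
  (hM : ∀ t : T, t ∈ IsLocalRing.maximalIdeal T → (t : K) ∈ A)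

theorem inc_coe (a : A) : ((Subring.inclusion hAT a : T) : K) = (a : K) := rfl

theorem inc_inj : Function.Injective (Subring.inclusion hAT) := fun a b hab =>
  Subtype.ext (congrArg (fun t : T => (t : K)) hab)

include hM

/-- A prime of `A` contained in the maximal ideal `M` of `T` is (the trace of) a prime of
`T`, all of whose elements come from `p'`. -/
theorem keyIdeal (p' : Ideal A) (hp' : p'.IsPrime)
    (hle : p' ≤ (IsLocalRing.maximalIdeal T).comap (Subring.inclusion hAT)) :
    ∃ q' : Ideal T, q'.IsPrime ∧ q'.comap (Subring.inclusion hAT) = p' ∧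
      ∀ t ∈ q', ∃ a ∈ p', Subring.inclusion hAT a = t := by
  classical
  by_cases hex : ∃ m : A, Subring.inclusion hAT m ∈ IsLocalRing.maximalIdeal T ∧ m ∉ p'
  · obtain ⟨m₀, hm₀M, hm₀p⟩ := hex
    have hsmul : ∀ (t : T) (x : T), (∃ a ∈ p', Subring.inclusion hAT a = x) →
        ∃ b ∈ p', Subring.inclusion hAT b = t * x := by
      rintro t x ⟨a, hap, rfl⟩
      have htxM : t * Subring.inclusion hAT a ∈ IsLocalRing.maximalIdeal T :=
        Ideal.mul_mem_left _ t (hle hap)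
      have htxA : ((t * Subring.inclusion hAT a : T) : K) ∈ A := hM _ htxM
      have htmM : t * Subring.inclusion hAT m₀ ∈ IsLocalRing.maximalIdeal T :=
        Ideal.mul_mem_left _ t hm₀M
      have htmA : ((t * Subring.inclusion hAT m₀ : T) : K) ∈ A := hM _ htmM
      refine ⟨⟨_, htxA⟩, ?_, Subtype.ext rfl⟩
      have key : (⟨_, htxA⟩ * m₀ : A) = (⟨_, htmA⟩ * a : A) := by
        apply Subtype.ext
        show ((t * Subring.inclusion hAT a : T) : K) * (m₀ : K)
            = ((t * Subring.inclusion hAT m₀ : T) : K) * (a : K)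
        push_cast [inc_coe]
        ring
      have hmem : (⟨_, htxA⟩ * m₀ : A) ∈ p' := key ▸ Ideal.mul_mem_left _ _ hap
      rcases hp'.mem_or_mem hmem with hb | hm
      · exact hb
      · exact absurd hm hm₀p
    refine ⟨{ carrier := {t : T | ∃ a ∈ p', Subring.inclusion hAT a = t},
              add_mem' := ?_, zero_mem' := ⟨0, p'.zero_mem, map_zero _⟩,
              smul_mem' := fun t x hx => hsmul t x hx }, ?_, ?_, fun t ht => ht⟩
    · rintro x y ⟨a, hap, rfl⟩ ⟨b, hbp, rfl⟩
      exact ⟨a + b, p'.add_mem hap hbp, map_add _ _ _⟩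
    · rw [Ideal.isPrime_iff]
      constructor
      · rw [Ne, Ideal.eq_top_iff_one]
        rintro ⟨a, hap, ha1⟩
        have ha : a = 1 := inc_inj T A hAT (ha1.trans (map_one _).symm)
        exact hp'.ne_top (Ideal.eq_top_iff_one _ |>.mpr (ha ▸ hap))
      · intro s t hst
        by_cases hsM : s ∈ IsLocalRing.maximalIdeal T
        · by_cases htM : t ∈ IsLocalRing.maximalIdeal T
          · obtain ⟨a, hap, ha⟩ := hst
            set sA : A := ⟨(s : K), hM s hsM⟩ with hsA
            set tA : A := ⟨(t : K), hM t htM⟩ with htA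
            have hences : Subring.inclusion hAT sA = s := Subtype.ext rfl
            have hencet : Subring.inclusion hAT tA = t := Subtype.ext rfl
            have : sA * tA = a := by
              apply inc_inj T A hAT
              rw [map_mul, hences, hencet, ha]
            have hmem : sA * tA ∈ p' := by rw [this]; exact hap
            rcases hp'.mem_or_mem hmem with h | h
            · exact Or.inl ⟨sA, h, hences⟩
            · exact Or.inr ⟨tA, h, hencet⟩
          · -- t is a unit
            have hu : IsUnit t := IsLocalRing.notMem_maximalIdeal.mp htM
            left
            obtain ⟨b, hbp, hb⟩ := hsmul (↑hu.unit⁻¹) (s * t) hst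
            refine ⟨b, hbp, hb.trans ?_⟩
            calc (↑hu.unit⁻¹ : T) * (s * t) = s * ((↑hu.unit⁻¹ : T) * t) := by ring
              _ = s := by rw [hu.val_inv_mul, mul_one]
        · -- s is a unit
          have hu : IsUnit s := IsLocalRing.notMem_maximalIdeal.mp hsM
          right
          obtain ⟨b, hbp, hb⟩ := hsmul (↑hu.unit⁻¹) (s * t) hst
          refine ⟨b, hbp, hb.trans ?_⟩
          calc (↑hu.unit⁻¹ : T) * (s * t) = ((↑hu.unit⁻¹ : T) * s) * t := by ring
            _ = t := by rw [hu.val_inv_mul, one_mul]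
    · apply Ideal.ext
      intro a
      simp only [Ideal.mem_comap]
      constructor
      · rintro ⟨a', ha'p, ha'⟩
        rwa [← inc_inj T A hAT ha']
      · intro hap
        exact ⟨a, hap, rfl⟩
  · push_neg at hex
    have hpeq : p' = (IsLocalRing.maximalIdeal T).comap (Subring.inclusion hAT) :=
      le_antisymm hle fun a ha => hex a ha
    refine ⟨IsLocalRing.maximalIdeal T, (IsLocalRing.maximalIdeal.isMaximal T).isPrime,
      hpeq.symm, fun t ht => ?_⟩
    have htA : (t : K) ∈ A := hM t ht
    refine ⟨⟨_, htA⟩, ?_, Subtype.ext rfl⟩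
    exact hex _ (by rw [show Subring.inclusion hAT ⟨_, htA⟩ = t from Subtype.ext rfl]; exact ht)

theorem prime_le_max (p' : Ideal A) (hp' : p'.IsPrime) (m₀ : A)
    (hm₀M : Subring.inclusion hAT m₀ ∈ IsLocalRing.maximalIdeal T) (hm₀p : m₀ ∉ p') :
    p' ≤ (IsLocalRing.maximalIdeal T).comap (Subring.inclusion hAT) := by
  intro a hap
  simp only [Ideal.mem_comap]
  by_contra hnot
  have hu : IsUnit (Subring.inclusion hAT a : T) := IsLocalRing.notMem_maximalIdeal.mp hnot
  have hcM : (Subring.inclusion hAT m₀ * ↑hu.unit⁻¹ : T) ∈ IsLocalRing.maximalIdeal T :=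
    Ideal.mul_mem_right _ _ hm₀M
  have hcA : ((Subring.inclusion hAT m₀ * ↑hu.unit⁻¹ : T) : K) ∈ A := hM _ hcM
  have key : (⟨_, hcA⟩ * a : A) = m₀ := by
    apply inc_inj T A hAT
    rw [map_mul, show Subring.inclusion hAT ⟨_, hcA⟩
      = Subring.inclusion hAT m₀ * ↑hu.unit⁻¹ from Subtype.ext rfl, mul_assoc,
      hu.val_inv_mul, mul_one]
  exact hm₀p (key ▸ Ideal.mul_mem_left _ _ hap)

theorem gd_AT : GoesDown (Subring.inclusion hAT) := by
  intro p' p hp' hp hle q hq hcq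
  have hqM : q ≤ IsLocalRing.maximalIdeal T := IsLocalRing.le_maximalIdeal hq.ne_top
  have hle' : p' ≤ (IsLocalRing.maximalIdeal T).comap (Subring.inclusion hAT) :=
    le_trans hle (hcq ▸ Ideal.comap_mono hqM)
  obtain ⟨q', hq'p, hq'c, hq's⟩ := keyIdeal T A hAT hM p' hp' hle'
  refine ⟨q', hq'p, fun t ht => ?_, hq'c⟩
  obtain ⟨a, hap, rfl⟩ := hq's t ht
  have : a ∈ p := hle hap
  rw [← hcq] at this
  exact this

end GD

/-! ### The pullback construction -/

section Pullback

variable {K kf : Type*} [Field K] [Field kf] (T : Subring K) [IsLocalRing T]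
  (π : T →+* kf)

/-- The pullback of a subring `E` of the residue field, as a subring of `K`. -/
abbrev pb (E : Subring kf) : Subring K := (E.comap π).map T.subtype

theorem pb_le (E : Subring kf) : pb T π E ≤ T := by
  rintro x ⟨t, _, rfl⟩
  exact t.2

theorem pb_mono {D E : Subring kf} (h : D ≤ E) : pb T π D ≤ pb T π E := by
  rintro x ⟨t, htD, rfl⟩
  exact ⟨t, h htD, rfl⟩

theorem mem_pb (E : Subring kf) (x : K) :
    x ∈ pb T π E ↔ ∃ t : T, π t ∈ E ∧ (t : K) = x := by
  simp [Subring.mem_map, Subring.mem_comap]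

variable (hker : RingHom.ker π = IsLocalRing.maximalIdeal T)

include hker in
theorem mem_pb_max (E : Subring kf) : ∀ t : T, t ∈ IsLocalRing.maximalIdeal T →
    (t : K) ∈ pb T π E := by
  intro t ht
  refine (mem_pb T π E _).mpr ⟨t, ?_, rfl⟩
  have : π t = 0 := by rw [← RingHom.mem_ker, hker]; exact ht
  rw [this]; exact E.zero_mem

theorem pbHom_mem (E : Subring kf) (x : pb T π E) :
    π (Subring.inclusion (pb_le T π E) x) ∈ E := by
  obtain ⟨t, htE, ht⟩ := x.2
  rw [show Subring.inclusion (pb_le T π E) x = t from Subtype.ext ht.symm]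
  exact htE

/-- The restriction of `π` to the pullback, as a map onto `E`. -/
def pbHom (E : Subring kf) : pb T π E →+* E :=
  (π.comp (Subring.inclusion (pb_le T π E))).codRestrict E.toSubsemiring (pbHom_mem T π E)

theorem pbHom_coe (E : Subring kf) (x : pb T π E) :
    (pbHom T π E x : kf) = π (Subring.inclusion (pb_le T π E) x) := rfl

theorem pbHom_surj (hπ : Function.Surjective π) (E : Subring kf) :
    Function.Surjective (pbHom T π E) := by
  intro e
  obtain ⟨t, ht⟩ := hπ (e : kf)
  have htE : π t ∈ E := by rw [ht]; exact e.2
  refine ⟨⟨(t : K), (mem_pb T π E _).mpr ⟨t, htE, rfl⟩⟩, ?_⟩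
  apply Subtype.ext
  rw [pbHom_coe, show Subring.inclusion (pb_le T π E) ⟨(t : K), _⟩ = t from Subtype.ext rfl, ht]

include hker in
theorem ker_pbHom (E : Subring kf) :
    RingHom.ker (pbHom T π E)
      = (IsLocalRing.maximalIdeal T).comap (Subring.inclusion (pb_le T π E)) := by
  ext x
  rw [RingHom.mem_ker, Ideal.mem_comap, ← hker, RingHom.mem_ker]
  constructor
  · intro h
    have := congrArg (fun z : E => (z : kf)) h
    simpa [pbHom_coe] using this
  · intro h
    apply Subtype.ext
    rw [pbHom_coe, h]
    rfl

theorem pbHom_comm {D E : Subring kf} (h : D ≤ E) (a : pb T π D) :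
    Subring.inclusion h (pbHom T π D a) = pbHom T π E (Subring.inclusion (pb_mono T π h) a) :=
  Subtype.ext rfl

theorem inc_trans {R : Type*} [Ring R] {A B C : Subring R} (h1 : A ≤ B) (h2 : B ≤ C) (a : A) :
    Subring.inclusion h2 (Subring.inclusion h1 a) = Subring.inclusion (h1.trans h2) a :=
  Subtype.ext rfl

variable {D E : Subring kf} (hDE : D ≤ E)

include hker in
theorem gd_pb (hπ : Function.Surjective π) (hgd : GoesDown (Subring.inclusion hDE)) :
    GoesDown (Subring.inclusion (pb_mono T π hDE)) := by
  set A := pb T π D with hA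
  set B := pb T π E with hB
  have hAT : A ≤ T := pb_le T π D
  have hBT : B ≤ T := pb_le T π E
  have hAB : A ≤ B := pb_mono T π hDE
  have hMA := mem_pb_max T π hker D
  intro p' p hp' hp hle q hq hcq
  by_cases hMp' : (IsLocalRing.maximalIdeal T).comap (Subring.inclusion hAT) ≤ p'
  · -- primes containing M: use the going-down property of D ≤ E
    set ρA := pbHom T π D with hρA
    set ρB := pbHom T π E with hρB
    have hsA : Function.Surjective ρA := pbHom_surj T π hπ D
    have hsB : Function.Surjective ρB := pbHom_surj T π hπ E
    have hkerA : RingHom.ker ρA ≤ p' := by rw [hρA, ker_pbHom T π hker D]; exact hMp'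
    have hkerAp : RingHom.ker ρA ≤ p := le_trans hkerA hle
    have hkerB : RingHom.ker ρB ≤ q := by
      intro b hb
      rw [RingHom.mem_ker] at hb
      have hbM : Subring.inclusion hBT b ∈ IsLocalRing.maximalIdeal T := by
        rw [← hker, RingHom.mem_ker]
        exact congrArg (fun z : E => (z : kf)) hb
      have hbA : (b : K) ∈ A := hMA _ hbM
      have ha : (⟨(b : K), hbA⟩ : A) ∈ p' := by
        apply hMp'
        rw [Ideal.mem_comap]
        exact hbM
      have := hle ha
      rw [← hcq, Ideal.mem_comap] at this
      rwa [show Subring.inclusion hAB ⟨(b : K), hbA⟩ = b from Subtype.ext rfl] at this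
    have hpbar' : (p'.map ρA).IsPrime := Ideal.map_isPrime_of_surjective hsA hkerA
    have hpbar : (p.map ρA).IsPrime := Ideal.map_isPrime_of_surjective hsA hkerAp
    have hqbar : (q.map ρB).IsPrime := Ideal.map_isPrime_of_surjective hsB hkerB
    have hlebar : p'.map ρA ≤ p.map ρA := Ideal.map_mono hle
    have hcbar : (q.map ρB).comap (Subring.inclusion hDE) = p.map ρA := by
      ext d
      rw [Ideal.mem_comap]
      constructor
      · intro hd
        obtain ⟨b, hbq, hbe⟩ := (Ideal.mem_map_iff_of_surjective ρB hsB).mp hd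
        obtain ⟨a, rfl⟩ := hsA d
        have hab : Subring.inclusion hAB a - b ∈ RingHom.ker ρB := by
          rw [RingHom.sub_mem_ker_iff, ← pbHom_comm T π hDE a, hbe]
        have haq : Subring.inclusion hAB a ∈ q := by
          have := q.add_mem (hkerB hab) hbq
          simpa using this
        have hap : a ∈ p := by rw [← hcq, Ideal.mem_comap]; exact haq
        exact Ideal.mem_map_of_mem ρA hap
      · intro hd
        obtain ⟨a, hap, rfl⟩ := (Ideal.mem_map_iff_of_surjective ρA hsA).mp hd
        rw [pbHom_comm T π hDE a]
        apply Ideal.mem_map_of_mem ρB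
        rw [← hcq, Ideal.mem_comap] at hap
        exact hap
    obtain ⟨qbar', hqbar'p, hqbar'le, hqbar'c⟩ := hgd hpbar' hpbar hlebar hqbar hcbar
    refine ⟨qbar'.comap ρB, hqbar'p.comap _, ?_, ?_⟩
    · have h1 : qbar'.comap ρB ≤ (q.map ρB).comap ρB := Ideal.comap_mono hqbar'le
      have h2 : (q.map ρB).comap ρB = q := by
        rw [Ideal.comap_map_of_surjective ρB hsB, ← RingHom.ker_eq_comap_bot,
          sup_eq_left.mpr hkerB]
      exact h2 ▸ h1
    · ext a
      rw [Ideal.mem_comap, Ideal.mem_comap, ← pbHom_comm T π hDE a]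
      constructor
      · intro h
        have hmem : ρA a ∈ p'.map ρA := by
          have := Ideal.mem_comap.mpr h
          rw [hqbar'c] at this
          exact this
        obtain ⟨a', ha'p, ha'e⟩ := (Ideal.mem_map_iff_of_surjective ρA hsA).mp hmem
        have hsub : a - a' ∈ RingHom.ker ρA := by rw [RingHom.sub_mem_ker_iff, ha'e]
        have := p'.add_mem (hkerA hsub) ha'p
        simpa using this
      · intro h
        have hmem : ρA a ∈ p'.map ρA := Ideal.mem_map_of_mem ρA h
        exact Ideal.mem_comap.mp (hqbar'c ▸ hmem : ρA a ∈ qbar'.comap (Subring.inclusion hDE))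
  · -- p' does not contain M: lift p' itself to a prime of T
    obtain ⟨m₀, hm₀M, hm₀p⟩ := SetLike.not_le_iff_exists.mp hMp'
    have hle' := prime_le_max T A hAT hMA p' hp' m₀ hm₀M hm₀p
    obtain ⟨q'T, hq'Tp, hq'Tc, hq'Ts⟩ := keyIdeal T A hAT hMA p' hp' hle'
    refine ⟨q'T.comap (Subring.inclusion hBT), hq'Tp.comap _, ?_, ?_⟩
    · intro b hb
      rw [Ideal.mem_comap] at hb
      obtain ⟨a, hap, ha⟩ := hq'Ts _ hb
      have hab : Subring.inclusion hAB a = b :=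
        Subtype.ext (congrArg (fun t : T => (t : K)) ha)
      have : a ∈ p := hle hap
      rw [← hcq, Ideal.mem_comap] at this
      rwa [hab] at this
    · ext a
      rw [Ideal.mem_comap, Ideal.mem_comap, inc_trans, ← hq'Tc, Ideal.mem_comap]

theorem colonCond_pb (hπ : Function.Surjective π)
    (h : ColonCond (pb T π D) (pb T π E)) : ColonCond D E := by
  intro e
  obtain ⟨t, ht⟩ := hπ (e : kf)
  have htB : (t : K) ∈ pb T π E := (mem_pb T π E _).mpr ⟨t, by rw [ht]; exact e.2, rfl⟩
  obtain ⟨n, c, y, h1, h2⟩ := h ⟨(t : K), htB⟩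
  refine ⟨n, fun j => ⟨π (Subring.inclusion (pb_le T π D) (c j)), pbHom_mem T π D (c j)⟩,
    fun j => ⟨π (Subring.inclusion (pb_le T π E) (y j)), pbHom_mem T π E (y j)⟩, ?_, ?_⟩
  · intro j
    show π (Subring.inclusion (pb_le T π D) (c j)) * (e : kf) ∈ D
    obtain ⟨t', ht'D, ht'⟩ := (mem_pb T π D _).mp (h1 j)
    have heq : t' = Subring.inclusion (pb_le T π D) (c j) * t := Subtype.ext ht'
    rw [← ht, ← map_mul, ← heq]
    exact ht'D
  · show ∑ j, π (Subring.inclusion (pb_le T π D) (c j))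
      * π (Subring.inclusion (pb_le T π E) (y j)) = 1
    have hsum : (∑ j, Subring.inclusion (pb_le T π D) (c j)
        * Subring.inclusion (pb_le T π E) (y j) : T) = 1 := by
      apply Subtype.ext
      rw [AddSubmonoidClass.coe_finset_sum]
      simpa using h2
    calc ∑ j, π (Subring.inclusion (pb_le T π D) (c j)) * π (Subring.inclusion (pb_le T π E) (y j))
        = π (∑ j, Subring.inclusion (pb_le T π D) (c j) * Subring.inclusion (pb_le T π E) (y j)) := by
          rw [map_sum]; exact Finset.sum_congr rfl fun j _ => (map_mul _ _ _).symm
      _ = 1 := by rw [hsum, map_one]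

theorem frac_pb [IsFractionRing T K] [IsFractionRing D kf]
    (hπ : Function.Surjective π) :
    ∀ z : K, ∃ a b : pb T π D, (b : K) ≠ 0 ∧ z * b = a := by
  have hmulc : ∀ t : T, ∃ c : T, (c : K) ∈ pb T π D ∧ c ≠ 0 ∧ ((t * c : T) : K) ∈ pb T π D := by
    intro t
    obtain ⟨⟨d1, d2⟩, hd⟩ := IsLocalization.surj (nonZeroDivisors D) (π t)
    obtain ⟨w, hw⟩ := hπ (algebraMap D kf d2)
    have hd2 : (algebraMap D kf d2 : kf) ≠ 0 := by
      have h1 : (d2 : D) ≠ 0 := nonZeroDivisors.ne_zero d2.2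
      show ((d2 : D) : kf) ≠ 0
      simpa using h1
    refine ⟨w, (mem_pb T π D _).mpr ⟨w, by rw [hw]; exact d2.1.2, rfl⟩, ?_, ?_⟩
    · intro h0
      rw [h0, map_zero] at hw
      exact hd2 hw.symm
    · refine (mem_pb T π D _).mpr ⟨t * w, ?_, rfl⟩
      rw [map_mul, hw, hd]
      exact d1.2
  intro z
  obtain ⟨⟨t, u⟩, hz⟩ := IsLocalization.surj (nonZeroDivisors T) z
  obtain ⟨ct, hctA, hct0, hctM⟩ := hmulc t
  obtain ⟨cu, hcuA, hcu0, hcuM⟩ := hmulc (u : T)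
  have hu0 : (u : T) ≠ 0 := nonZeroDivisors.ne_zero u.2
  refine ⟨⟨((t * ct * cu : T) : K), ?_⟩, ⟨(((u : T) * cu * ct : T) : K), ?_⟩, ?_, ?_⟩
  · have : ((t * ct * cu : T) : K) = ((t * ct : T) : K) * ((cu : T) : K) := by push_cast; ring
    rw [this]
    exact (pb T π D).mul_mem hctM hcuA
  · have : (((u : T) * cu * ct : T) : K) = (((u : T) * cu : T) : K) * ((ct : T) : K) := by
      push_cast; ring
    rw [this]
    exact (pb T π D).mul_mem hcuM hctA
  · show (((u : T) * cu * ct : T) : K) ≠ 0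
    push_cast
    refine mul_ne_zero (mul_ne_zero ?_ ?_) ?_
    · simpa using hu0
    · simpa using hcu0
    · simpa using hct0
  · show z * (((u : T) * cu * ct : T) : K) = ((t * ct * cu : T) : K)
    have hz' : z * ((u : T) : K) = ((t : T) : K) := hz
    push_cast
    calc z * ((u : T) * (cu : K) * ct) = (z * (u : T)) * (cu : K) * ct := by ring
      _ = ((t : T) : K) * (cu : K) * ct := by rw [hz']
      _ = (t : K) * ct * cu := by ring

end Pullback

end Stmt13Aux

open Stmt13Aux in
/-- Let `(T, M)` be a local domain (a subring of its fraction field `K`) with residue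
field `k` and residue map `π`, and let `D` be a subring of `k` with fraction field `k`.
If the pullback `A = π⁻¹(D)` is perinormal, then both `D` and `T` are perinormal. -/
theorem stmt_13 {K k : Type*} [Field K] [Field k] (T : Subring K)
    [IsLocalRing T] [IsFractionRing T K]
    (π : T →+* k) (hπ : Function.Surjective π)
    (hker : RingHom.ker π = IsLocalRing.maximalIdeal T)
    (D : Subring k) [IsFractionRing D k]
    (hA : IsPerinormalSubring ((D.comap π).map T.subtype)) :
    IsPerinormalSubring D ∧ IsPerinormalSubring T := by
  have hfracA : ∀ z : K, ∃ a b : pb T π D, (b : K) ≠ 0 ∧ z * b = a := frac_pb T π hπ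
  constructor
  · -- D is perinormal
    intro E hDE hgd
    have hgdAB : GoesDown (Subring.inclusion (pb_mono T π hDE)) :=
      gd_pb T π hker hDE hπ hgd
    have hflatAB := hA (pb T π E) (pb_mono T π hDE) hgdAB
    have hcolAB : ColonCond (pb T π D) (pb T π E) :=
      colonCond_of_flat (pb_mono T π hDE) hfracA hflatAB
    have hcolDE : ColonCond D E := colonCond_pb T π hπ hcolAB
    exact flat_of_colonCond hDE hcolDE
  · -- T is perinormal
    intro S hTS hgd
    have hAT : pb T π D ≤ T := pb_le T π D
    have hgdAT : GoesDown (Subring.inclusion hAT) :=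
      gd_AT T (pb T π D) hAT (mem_pb_max T π hker D)
    have hgdAS : GoesDown (Subring.inclusion (hAT.trans hTS)) := by
      have hcomp := goesDown_comp hgdAT hgd
      have heq : (Subring.inclusion hTS).comp (Subring.inclusion hAT)
          = Subring.inclusion (hAT.trans hTS) := RingHom.ext fun x => Subtype.ext rfl
      rwa [heq] at hcomp
    have hflatAS := hA S (hAT.trans hTS) hgdAS
    have hcolAS : ColonCond (pb T π D) S :=
      colonCond_of_flat (hAT.trans hTS) hfracA hflatAS
    have hcolTS : ColonCond T S := colonCond_mono hAT hcolAS
    exact flat_of_colonCond hTS hcolTS
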